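/- (Vanishing of the mixed curvature block when the cubic field is a gradient; 'Q₂ = 0 implies 𝒜′ = 0' from the proof of Corollary 5.2.) Let n ≥ 2 and let A = (A_{ijkl})_{i,j,k,l=1..n} be a 4-tensor of real numbers with the curvature symmetries. Suppose there exists a twice continuously differentiable function b : B₁(0) ⊂ ℝ^{n−1} → ℝ, with the coordinates of ℝ^{n−1} labeled x'_2, …, x'_n, such that for every j ∈ {2,…,n} and every x' ∈ B₁(0): ∂_{x_j} b(x') = (1/3) Σ_{k,l=2}^n A_{1kjl} x'_k x'_l. Then A_{1kjl} = 0 for all j, k, l ∈ {2,…,n}. -/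

import Mathlib

open Set

noncomputable section

set_option maxHeartbeats 1000000

/-- A 4-tensor has the curvature symmetries. -/
def CurvSymm {N : ℕ} (A : Fin N → Fin N → Fin N → Fin N → ℝ) : Prop :=
  (∀ i j k l, A i j k l = - A j i k l) ∧
  (∀ i j k l, A i j k l = - A i j l k) ∧
  (∀ i j k l, A i j k l = A k l i j) ∧
  (∀ i j k l, A i j k l + A i k l j + A i l j k = 0)

/-- (Vanishing of the mixed curvature block when the cubic
field is a gradient; `Q₂ = 0` implies `𝒜′ = 0`, from the proof of
Corollary 5.2.)  The ambient dimension is `n = m+1 ≥ 2`; the index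
`0 : Fin (m+1)` plays the role of the index `1` of the paper and `j.succ` the
role of a primed index `∈ {2,…,n}`. -/
theorem mixed_block_vanishes (m : ℕ) (hm : 1 ≤ m)
    (A : Fin (m+1) → Fin (m+1) → Fin (m+1) → Fin (m+1) → ℝ) (hA : CurvSymm A)
    (b : EuclideanSpace ℝ (Fin m) → ℝ)
    (hb : ContDiffOn ℝ 2 b (Metric.ball 0 1))
    (hgrad : ∀ j : Fin m, ∀ x ∈ Metric.ball (0 : EuclideanSpace ℝ (Fin m)) 1,
      fderiv ℝ b x (EuclideanSpace.single j 1)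
        = (1/3) * ∑ k, ∑ l, A 0 k.succ j.succ l.succ * x k * x l) :
    ∀ j k l : Fin m, A 0 k.succ j.succ l.succ = 0 := by
  -- Step 1: the symmetry of the second derivative gives the relation (S).
  have key : ∀ i j p : Fin m,
      A 0 i.succ j.succ p.succ + A 0 p.succ j.succ i.succ
        = A 0 j.succ i.succ p.succ + A 0 p.succ i.succ j.succ := by
    intro i j p
    set x : EuclideanSpace ℝ (Fin m) := (1/2 : ℝ) • EuclideanSpace.single p 1 with hxdef
    have hx : x ∈ Metric.ball (0 : EuclideanSpace ℝ (Fin m)) 1 := by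
      simp only [Metric.mem_ball, dist_zero_right, hxdef, norm_smul,
        EuclideanSpace.norm_single, norm_one]
      norm_num
    have hball : Metric.ball (0 : EuclideanSpace ℝ (Fin m)) 1 ∈ nhds x :=
      Metric.isOpen_ball.mem_nhds hx
    have hCA : ContDiffAt ℝ 2 b x := hb.contDiffAt hball
    have hdiff : DifferentiableAt ℝ (fderiv ℝ b) x :=
      (hCA.fderiv_right (le_refl _)).differentiableAt one_ne_zero
    have hsymm := hCA.isSymmSndFDerivAt (by simp)
    have main : ∀ q r : Fin m,
        fderiv ℝ (fderiv ℝ b) x (EuclideanSpace.single r 1) (EuclideanSpace.single q 1)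
          = (1/6) * (A 0 p.succ q.succ r.succ + A 0 r.succ q.succ p.succ) := by
      intro q r
      -- the explicit derivative of the quadratic polynomial
      have hF : HasFDerivAt
          (fun y : EuclideanSpace ℝ (Fin m) =>
            (1/3 : ℝ) * ∑ k, ∑ l, A 0 k.succ q.succ l.succ
              * EuclideanSpace.proj (𝕜 := ℝ) k y * EuclideanSpace.proj (𝕜 := ℝ) l y)
          (((1/3 : ℝ) • ∑ k, ∑ l,
            ((A 0 k.succ q.succ l.succ * EuclideanSpace.proj (𝕜 := ℝ) k x)
                • EuclideanSpace.proj (𝕜 := ℝ) l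
              + EuclideanSpace.proj (𝕜 := ℝ) l x
                • (A 0 k.succ q.succ l.succ • EuclideanSpace.proj (𝕜 := ℝ) k)) :
            EuclideanSpace ℝ (Fin m) →L[ℝ] ℝ)) x := by
        apply HasFDerivAt.const_mul
        apply HasFDerivAt.fun_sum
        intro k _
        apply HasFDerivAt.fun_sum
        intro l _
        exact (((EuclideanSpace.proj (𝕜 := ℝ) k).hasFDerivAt.const_mul
          (A 0 k.succ q.succ l.succ)).mul (EuclideanSpace.proj (𝕜 := ℝ) l).hasFDerivAt)
      have h1 : HasFDerivAt (fun y => fderiv ℝ b y (EuclideanSpace.single q 1))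
          ((fderiv ℝ b x).comp 0
            + (fderiv ℝ (fderiv ℝ b) x).flip (EuclideanSpace.single q 1)) x :=
        hdiff.hasFDerivAt.clm_apply (hasFDerivAt_const _ _)
      have h2 : (fun y => fderiv ℝ b y (EuclideanSpace.single q 1))
          =ᶠ[nhds x] (fun y : EuclideanSpace ℝ (Fin m) =>
            (1/3 : ℝ) * ∑ k, ∑ l, A 0 k.succ q.succ l.succ
              * EuclideanSpace.proj (𝕜 := ℝ) k y * EuclideanSpace.proj (𝕜 := ℝ) l y) := by
        filter_upwards [hball] with y hy
        simpa using hgrad q y hy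
      have h3 := (h1.congr_of_eventuallyEq h2.symm).unique hF
      have h4 := congrArg (fun L : EuclideanSpace ℝ (Fin m) →L[ℝ] ℝ =>
        L (EuclideanSpace.single r 1)) h3
      simp only [ContinuousLinearMap.add_apply, ContinuousLinearMap.comp_zero,
        ContinuousLinearMap.zero_apply, zero_add, ContinuousLinearMap.flip_apply,
        ContinuousLinearMap.smul_apply, ContinuousLinearMap.sum_apply,
        ContinuousLinearMap.coe_smul', Pi.smul_apply, PiLp.proj_apply,
        EuclideanSpace.single_apply, hxdef, PiLp.smul_apply, smul_eq_mul,
        mul_ite, mul_one, mul_zero, ite_mul, zero_mul, Finset.sum_add_distrib,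
        Finset.sum_ite_eq', Finset.sum_ite_eq, Finset.sum_ite_irrel,
        Finset.sum_const_zero, Finset.mem_univ, if_true] at h4
      rw [h4]
      ring
    have h5 := hsymm (EuclideanSpace.single i 1) (EuclideanSpace.single j 1)
    rw [main j i, main i j] at h5
    linarith
  -- Step 2: pure algebra with the curvature symmetries.
  intro j k l
  obtain ⟨h12, h34, hpair, hbianchi⟩ := hA
  have e1 := key j l k
  have a1 : A 0 k.succ l.succ j.succ = - A 0 k.succ j.succ l.succ := by
    rw [h34 0 k.succ j.succ l.succ]; ring
  have a2 : A 0 l.succ k.succ j.succ = - A 0 l.succ j.succ k.succ := by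
    rw [h34 0 l.succ j.succ k.succ]; ring
  have bb := hbianchi 0 j.succ l.succ k.succ
  -- hbianchi : A 0 j l k + A 0 l k j + A 0 k j l = 0
  linarith
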